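/- Let t ≥ 2 and let P_b ∈ C^{n_b×n_{b+1}} be [Δ_b]-stable on Δ_{b+1} for b = 1,…,t, where Δ_b is a partition of ⟨n_b⟩. Then the product P₁P₂⋯P_t is [Δ₁]-stable on Δ_{t+1} and (P₁P₂⋯P_t)^{-+} = P₁^{-+}P₂^{-+}⋯P_t^{-+}. -/
import Mathlib


/-- Product `M 0 * M 1 * ⋯ * M (t-1)` of a chain of composable complex matrices. -/
noncomputable def chainProd : ∀ (t : ℕ) (τ : Fin (t + 1) → Type) [∀ i, Fintype (τ i)]
    [∀ i, DecidableEq (τ i)]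
    (_ : ∀ b : Fin t, Matrix (τ b.castSucc) (τ b.succ) ℂ),
    Matrix (τ 0) (τ (Fin.last t)) ℂ
  | 0, τ, _, _, _ => (1 : Matrix (τ 0) (τ 0) ℂ)
  | (t + 1), τ, _, _, M =>
      M 0 * chainProd t (fun i => τ i.succ) (fun b => M b.succ)

/-- `P` is `[Δ]`-stable on `Sg`. -/
def IsStableOn {m n : ℕ} (P : Matrix (Fin m) (Fin n) ℂ)
    (Δ : Finpartition (Finset.univ : Finset (Fin m)))
    (Sg : Finpartition (Finset.univ : Finset (Fin n))) : Prop :=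
  ∀ K ∈ Δ.parts, ∀ L ∈ Sg.parts, ∀ i ∈ K, ∀ i' ∈ K,
    ∑ j ∈ L, P i j = ∑ j ∈ L, P i' j

lemma chainProd_grouped_key : ∀ (t : ℕ) (n : Fin (t + 1) → ℕ)
    (Δ : ∀ i : Fin (t + 1), Finpartition (Finset.univ : Finset (Fin (n i))))
    (P : ∀ b : Fin t, Matrix (Fin (n b.castSucc)) (Fin (n b.succ)) ℂ)
    (g : ∀ b : Fin t, Matrix ↥(Δ b.castSucc).parts ↥(Δ b.succ).parts ℂ)
    (_ : ∀ (b : Fin t) (K : ↥(Δ b.castSucc).parts) (L : ↥(Δ b.succ).parts),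
      ∀ i ∈ (K : Finset (Fin (n b.castSucc))),
        ∑ j ∈ (L : Finset (Fin (n b.succ))), P b i j = g b K L)
    (K : ↥(Δ 0).parts) (L : ↥(Δ (Fin.last t)).parts),
      ∀ i ∈ (K : Finset (Fin (n 0))),
        ∑ j ∈ (L : Finset (Fin (n (Fin.last t)))),
          chainProd t (fun i => Fin (n i)) P i j =
        chainProd t (fun i => ↥(Δ i).parts) g K L
  | 0, n, Δ, P, g, hg, K, L, i, hi => by
      simp only [chainProd, Matrix.one_apply]
      refine (Finset.sum_ite_eq _ i fun _ => (1:ℂ)).trans ?_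
      split_ifs with h1 h2 h3
      · rfl
      · exact absurd (Subtype.ext ((Δ 0).eq_of_mem_parts K.2 L.2 hi h1)) h2
      · exact absurd (congrArg Subtype.val h3 ▸ hi) h1
      · rfl
  | (t + 1), n, Δ, P, g, hg, K, L, i, hi => by
      simp only [chainProd, Matrix.mul_apply]
      have IH := chainProd_grouped_key t (fun i => n i.succ) (fun i => Δ i.succ) (fun b => P b.succ)
        (fun b => g b.succ) (fun b => hg b.succ)
      have hsplit : (Finset.univ : Finset (Fin (n (0 : Fin (t+1)).succ)))
          = (Δ (0 : Fin (t+1)).succ).parts.biUnion id := by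
        rw [← Finset.sup_eq_biUnion]; exact ((Δ _).sup_parts).symm
      set LL : Finset (Fin (n (Fin.last (t+1)))) := (L : Finset (Fin (n (Fin.last (t+1))))) with hLL
      set Q : Matrix (Fin (n (0 : Fin (t+1)).succ)) (Fin (n (Fin.last (t+1)))) ℂ :=
        chainProd t (fun i => Fin (n i.succ)) (fun b => P b.succ) with hQ
      set G : Matrix ↥(Δ (0 : Fin (t+1)).succ).parts ↥(Δ (Fin.last (t+1))).parts ℂ :=
        chainProd t (fun i => ↥(Δ i.succ).parts) (fun b => g b.succ) with hG
      calc ∑ j ∈ LL, ∑ k, P 0 i k * Q k j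
          = ∑ k, P 0 i k * ∑ j ∈ LL, Q k j := by
            rw [Finset.sum_comm]; simp [Finset.mul_sum]
        _ = ∑ A ∈ (Δ (0 : Fin (t+1)).succ).parts, ∑ k ∈ A,
              P 0 i k * ∑ j ∈ LL, Q k j := by
            conv_lhs => rw [hsplit]
            rw [Finset.sum_biUnion ((Δ _).supIndep.pairwiseDisjoint)]
            rfl
        _ = ∑ A ∈ (Δ (0 : Fin (t+1)).succ).parts.attach, g 0 K A * G A L := by
            rw [← Finset.sum_attach]
            refine Finset.sum_congr rfl fun A _ => ?_
            have h1 : ∀ k ∈ (A : Finset (Fin (n (0 : Fin (t+1)).succ))),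
                ∑ j ∈ LL, Q k j = G A L := fun k hk => IH A L k hk
            rw [Finset.sum_congr rfl (fun k hk => by rw [h1 k hk]), ← Finset.sum_mul,
              hg 0 K A i hi]
        _ = _ := rfl

/-- if each `P b` is `[Δ_b]`-stable on `Δ_{b+1}` (`t ≥ 2`), then the product
`P₁⋯P_t` is `[Δ₁]`-stable on `Δ_{t+1}` and its grouped matrix is the product of the
grouped matrices `g b` of the `P b`. -/
theorem chainProd_isStableOn_and_grouped (t : ℕ) (ht : 2 ≤ t)
    (n : Fin (t + 1) → ℕ)
    (Δ : ∀ i : Fin (t + 1), Finpartition (Finset.univ : Finset (Fin (n i))))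
    (P : ∀ b : Fin t, Matrix (Fin (n b.castSucc)) (Fin (n b.succ)) ℂ)
    (hstab : ∀ b : Fin t, IsStableOn (P b) (Δ b.castSucc) (Δ b.succ))
    (g : ∀ b : Fin t, Matrix ↥(Δ b.castSucc).parts ↥(Δ b.succ).parts ℂ)
    (hg : ∀ (b : Fin t) (K : ↥(Δ b.castSucc).parts) (L : ↥(Δ b.succ).parts),
      ∀ i ∈ (K : Finset (Fin (n b.castSucc))),
        ∑ j ∈ (L : Finset (Fin (n b.succ))), P b i j = g b K L) :
    IsStableOn (chainProd t (fun i => Fin (n i)) P) (Δ 0) (Δ (Fin.last t)) ∧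
    ∀ (K : ↥(Δ 0).parts) (L : ↥(Δ (Fin.last t)).parts),
      ∀ i ∈ (K : Finset (Fin (n 0))),
        ∑ j ∈ (L : Finset (Fin (n (Fin.last t)))),
          chainProd t (fun i => Fin (n i)) P i j =
        chainProd t (fun i => ↥(Δ i).parts) g K L := by
  have hkey := chainProd_grouped_key t n Δ P g hg
  refine ⟨fun K hK L hL i hi i' hi' => ?_, fun K L i hi => hkey K L i hi⟩
  rw [hkey ⟨K, hK⟩ ⟨L, hL⟩ i hi, hkey ⟨K, hK⟩ ⟨L, hL⟩ i' hi']
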